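/- arXiv:2102.03269 — 3 statements merged into one kernel-verified Lean document; each statement's English description precedes it below -/
import Mathlib

section
/- Correctness of the atomic decomposition: for a basic graph pattern P = tp_1 AND ... AND tp_n over a federation F = (C, int, ep) in which every service can evaluate triple patterns, the join over i of (⋃_{c∈C} ⟦tp_i⟧_{ep(c)}) equals ⟦P⟧_G where G = ⋃_{c∈C} ep(c). In symbols: ⋈_{i=1..n} (⋃_{c∈C} ⟦tp_i⟧_{ep(c)}) = ⟦tp_1⟧_G ⋈ ... ⋈ ⟦tp_n⟧_G. -/
/-- A solution mapping: a partial function from variables to RDF terms. -/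
abbrev Mapping (V T : Type) := V → Option T

/-- Two mappings are compatible if they agree on shared variables. -/
def compatible {V T : Type} (μ₁ μ₂ : Mapping V T) : Prop :=
  ∀ v a b, μ₁ v = some a → μ₂ v = some b → a = b

/-- Union of two mappings (left-biased; equals symmetric union on compatible mappings). -/
def munion {V T : Type} (μ₁ μ₂ : Mapping V T) : Mapping V T :=
  fun v => (μ₁ v).or (μ₂ v)

/-- Join of two sets of solution mappings. -/
def joinSet {V T : Type} (Ω₁ Ω₂ : Set (Mapping V T)) : Set (Mapping V T) :=
  {μ | ∃ μ₁ ∈ Ω₁, ∃ μ₂ ∈ Ω₂, compatible μ₁ μ₂ ∧ μ = munion μ₁ μ₂}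

/-- An RDF graph is a set of triples over terms. -/
abbrev RDFGraph (T : Type) := Set (T × T × T)

/-- A triple pattern: a triple over variables-or-terms. -/
structure TP (V T : Type) where
  s : V ⊕ T
  p : V ⊕ T
  o : V ⊕ T

/-- Apply a mapping to a pattern component. -/
def applyC {V T : Type} (μ : Mapping V T) : V ⊕ T → Option T
  | Sum.inl v => μ v
  | Sum.inr t => some t

/-- The variable `v` occurs in the triple pattern `t`. -/
def varIn {V T : Type} (v : V) (t : TP V T) : Prop :=
  t.s = Sum.inl v ∨ t.p = Sum.inl v ∨ t.o = Sum.inl v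

/-- The mapping `μ` instantiates pattern `t` to some triple of `G`. -/
def matchesTP {V T : Type} (μ : Mapping V T) (t : TP V T) (G : RDFGraph T) : Prop :=
  ∃ tr ∈ G, applyC μ t.s = some tr.1 ∧ applyC μ t.p = some tr.2.1 ∧
    applyC μ t.o = some tr.2.2

/-- Evaluation ⟦tp⟧_G: mappings with domain vars(tp) instantiating tp to a triple of G. -/
def evalTP {V T : Type} (t : TP V T) (G : RDFGraph T) : Set (Mapping V T) :=
  {μ | (∀ v, (μ v).isSome ↔ varIn v t) ∧ matchesTP μ t G}

/-- The empty solution mapping (identity of the join). -/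
def emptyMap {V T : Type} : Mapping V T := fun _ => none

/-- Join of a list of sets of solution mappings. -/
def joinList {V T : Type} (l : List (Set (Mapping V T))) : Set (Mapping V T) :=
  l.foldr joinSet {emptyMap}

/-- Evaluation of a BGP (given by the triple patterns with indices in `A`) over a graph:
the join of the individual triple-pattern evaluations, characterized directly. -/
def evalBGP {V T : Type} {n : ℕ} (tp : Fin n → TP V T) (A : Finset (Fin n))
    (G : RDFGraph T) : Set (Mapping V T) :=
  {μ | (∀ v, (μ v).isSome ↔ ∃ i ∈ A, varIn v (tp i)) ∧ ∀ i ∈ A, matchesTP μ (tp i) G}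

/-- Correctness of the atomic decomposition: for a BGP tp_1 AND ... AND tp_n over a
federation in which every service can evaluate triple patterns, the join over i of
(⋃_{c∈C} ⟦tp_i⟧_{ep(c)}) equals ⟦tp_1⟧_G ⋈ ... ⋈ ⟦tp_n⟧_G with G = ⋃_{c∈C} ep(c). -/
theorem atomic_decomposition_correct {V T S : Type} (C : Finset S) (ep : S → RDFGraph T)
    (tps : List (TP V T)) :
    joinList (tps.map (fun t => ⋃ c ∈ C, evalTP t (ep c))) =
      joinList (tps.map (fun t => evalTP t (⋃ c ∈ C, ep c))) := by
  have key : ∀ t : TP V T, (⋃ c ∈ C, evalTP t (ep c)) = evalTP t (⋃ c ∈ C, ep c) := by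
    intro t
    ext μ
    simp only [Set.mem_iUnion, evalTP, matchesTP, Set.mem_setOf_eq]
    constructor
    · rintro ⟨c, hc, hdom, tr, htr, h⟩
      exact ⟨hdom, tr, ⟨c, hc, htr⟩, h⟩
    · rintro ⟨hdom, tr, ⟨c, hc, htr⟩, h⟩
      exact ⟨c, hc, hdom, tr, htr, h⟩
  exact congrArg joinList (List.map_congr_left (fun t _ => key t))
end

section
/- The join of solution-mapping sets is associative and commutative: Ω1 ⋈ (Ω2 ⋈ Ω3) = (Ω1 ⋈ Ω2) ⋈ Ω3 and Ω1 ⋈ Ω2 = Ω2 ⋈ Ω1. -/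
lemma munion_some {V T : Type} {μ₁ μ₂ : Mapping V T} {v : V} {a : T}
    (h : munion μ₁ μ₂ v = some a) : μ₁ v = some a ∨ (μ₁ v = none ∧ μ₂ v = some a) := by
  unfold munion at h
  cases h1 : μ₁ v <;> simp [h1, Option.or] at h <;> simp [h]

lemma compatible_symm {V T : Type} {μ₁ μ₂ : Mapping V T} (h : compatible μ₁ μ₂) :
    compatible μ₂ μ₁ := fun v a b h2 h1 => (h v b a h1 h2).symm

lemma munion_comm' {V T : Type} {μ₁ μ₂ : Mapping V T} (h : compatible μ₁ μ₂) :
    munion μ₁ μ₂ = munion μ₂ μ₁ := by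
  funext v
  unfold munion
  cases h1 : μ₁ v <;> cases h2 : μ₂ v <;> simp [Option.or]
  exact h v _ _ h1 h2

lemma munion_assoc' {V T : Type} (μ₁ μ₂ μ₃ : Mapping V T) :
    munion μ₁ (munion μ₂ μ₃) = munion (munion μ₁ μ₂) μ₃ := by
  funext v
  unfold munion
  cases μ₁ v <;> simp [Option.or]

lemma munion_some_left {V T : Type} {μ₁ μ₂ : Mapping V T} {v : V} {a : T}
    (h : μ₁ v = some a) : munion μ₁ μ₂ v = some a := by simp [munion, h, Option.or]

lemma munion_some_right {V T : Type} {μ₁ μ₂ : Mapping V T} {v : V} {a : T}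
    (hc : compatible μ₁ μ₂) (h : μ₂ v = some a) : munion μ₁ μ₂ v = some a := by
  unfold munion
  cases h1 : μ₁ v with
  | none => simp [Option.or, h]
  | some c => simpa [Option.or] using hc v _ _ h1 h

lemma compat_left_of_union {V T : Type} {μ₁ μ₂ μ₃ : Mapping V T}
    (hc : compatible μ₂ μ₃) (h : compatible μ₁ (munion μ₂ μ₃)) : compatible μ₁ μ₂ :=
  fun v a b h1 h2 => h v a b h1 (munion_some_left h2)

lemma compat_right_of_union {V T : Type} {μ₁ μ₂ μ₃ : Mapping V T}
    (hc : compatible μ₂ μ₃) (h : compatible μ₁ (munion μ₂ μ₃)) : compatible μ₁ μ₃ :=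
  fun v a b h1 h3 => h v a b h1 (munion_some_right hc h3)

lemma compat_union_left {V T : Type} {μ₁ μ₂ μ₃ : Mapping V T}
    (h12 : compatible μ₁ μ₂) (h13 : compatible μ₁ μ₃) (h23 : compatible μ₂ μ₃) :
    compatible (munion μ₁ μ₂) μ₃ := by
  intro v a b h hb
  rcases munion_some h with h1 | ⟨h1, h2⟩
  · exact h13 v a b h1 hb
  · exact h23 v a b h2 hb

lemma compat_union_right {V T : Type} {μ₁ μ₂ μ₃ : Mapping V T}
    (h12 : compatible μ₁ μ₂) (h13 : compatible μ₁ μ₃) (h23 : compatible μ₂ μ₃) :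
    compatible μ₁ (munion μ₂ μ₃) := by
  intro v a b ha h
  rcases munion_some h with h2 | ⟨h2, h3⟩
  · exact h12 v a b ha h2
  · exact h13 v a b ha h3

/-- The join of solution-mapping sets is associative and commutative. -/
theorem joinSet_assoc_comm {V T : Type} (Ω₁ Ω₂ Ω₃ : Set (Mapping V T)) :
    joinSet Ω₁ (joinSet Ω₂ Ω₃) = joinSet (joinSet Ω₁ Ω₂) Ω₃ ∧
    joinSet Ω₁ Ω₂ = joinSet Ω₂ Ω₁ := by
  constructor
  · ext μ
    constructor
    · rintro ⟨μ₁, h1, _, ⟨μ₂, h2, μ₃, h3, c23, rfl⟩, c123, rfl⟩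
      have c12 := compat_left_of_union c23 c123
      have c13 := compat_right_of_union c23 c123
      exact ⟨munion μ₁ μ₂, ⟨μ₁, h1, μ₂, h2, c12, rfl⟩, μ₃, h3,
        compat_union_left c12 c13 c23, munion_assoc' μ₁ μ₂ μ₃⟩
    · rintro ⟨_, ⟨μ₁, h1, μ₂, h2, c12, rfl⟩, μ₃, h3, c123, rfl⟩
      have c13 : compatible μ₁ μ₃ :=
        fun v a b ha hb => c123 v a b (munion_some_left ha) hb
      have c23 : compatible μ₂ μ₃ :=
        fun v a b ha hb => c123 v a b (munion_some_right c12 ha) hb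
      exact ⟨μ₁, h1, munion μ₂ μ₃, ⟨μ₂, h2, μ₃, h3, c23, rfl⟩,
        compat_union_right c12 c13 c23, (munion_assoc' μ₁ μ₂ μ₃).symm⟩
  · ext μ
    constructor
    · rintro ⟨μ₁, h1, μ₂, h2, c, rfl⟩
      exact ⟨μ₂, h2, μ₁, h1, compatible_symm c, munion_comm' c⟩
    · rintro ⟨μ₂, h2, μ₁, h1, c, rfl⟩
      exact ⟨μ₁, h1, μ₂, h2, compatible_symm c, munion_comm' c⟩
end

section
/- For an exclusive group X (a set of triple patterns each having the single relevant source c_X in federation F), the evaluation of X over the graph of c_X equals the evaluation of X over the union of all federation graphs: ⟦X⟧_{ep(c_X)} = ⟦X⟧_{⋃_{c∈C} ep(c)}. -/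
open scoped Classical in
/-- The relevant sources of the i-th triple pattern within federation C. -/
noncomputable def rSet {V T S : Type} {n : ℕ} (C : Finset S) (ep : S → RDFGraph T)
    (tp : Fin n → TP V T) (i : Fin n) : Finset S :=
  C.filter (fun c => evalTP (tp i) (ep c) ≠ ∅)

/-- For an exclusive group X (every triple pattern of X has the single relevant
source c_X), the evaluation of X over the graph of c_X equals the evaluation of X
over the union of all federation graphs. -/
theorem exclusive_group_eval {V T S : Type} {n : ℕ} (C : Finset S)
    (ep : S → RDFGraph T) (tp : Fin n → TP V T) (X : Finset (Fin n)) (cX : S)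
    (hX : ∀ i ∈ X, rSet C ep tp i = {cX}) :
    evalBGP tp X (ep cX) = evalBGP tp X (⋃ c ∈ C, ep c) := by
  classical
  have hmem : ∀ i ∈ X, cX ∈ C := by
    intro i hi
    have h := hX i hi
    have : cX ∈ rSet C ep tp i := by rw [h]; exact Finset.mem_singleton_self cX
    exact Finset.mem_of_mem_filter cX this
  ext μ
  constructor
  · rintro ⟨hdom, hmat⟩
    refine ⟨hdom, fun i hi => ?_⟩
    obtain ⟨tr, htr, h1, h2, h3⟩ := hmat i hi
    exact ⟨tr, Set.mem_biUnion (hmem i hi) htr, h1, h2, h3⟩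
  · rintro ⟨hdom, hmat⟩
    refine ⟨hdom, fun i hi => ?_⟩
    obtain ⟨tr, htr, h1, h2, h3⟩ := hmat i hi
    obtain ⟨c, hc, htrc⟩ := by
      simpa using htr
    -- restricted mapping
    set μ' : Mapping V T := fun v => if varIn v (tp i) then μ v else none with hμ'
    have hvsome : ∀ v, varIn v (tp i) → (μ v).isSome := by
      intro v hv
      rcases hv with h | h | h
      · simp [applyC, h] at h1; simp [h1]
      · simp [applyC, h] at h2; simp [h2]
      · simp [applyC, h] at h3; simp [h3]
    have happ : ∀ x : V ⊕ T, (x = (tp i).s ∨ x = (tp i).p ∨ x = (tp i).o) →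
        applyC μ' x = applyC μ x := by
      rintro x hx
      cases x with
      | inl v =>
        have hv : varIn v (tp i) := by
          rcases hx with h | h | h
          · exact Or.inl h.symm
          · exact Or.inr (Or.inl h.symm)
          · exact Or.inr (Or.inr h.symm)
        simp [applyC, hμ', hv]
      | inr t => rfl
    have hμ'mem : μ' ∈ evalTP (tp i) (ep c) := by
      refine ⟨fun v => ?_, tr, htrc, ?_, ?_, ?_⟩
      · constructor
        · intro hs
          by_contra hv
          simp [hμ', hv] at hs
        · intro hv
          simpa [hμ', hv] using hvsome v hv
      · rw [happ _ (Or.inl rfl)]; exact h1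
      · rw [happ _ (Or.inr (Or.inl rfl))]; exact h2
      · rw [happ _ (Or.inr (Or.inr rfl))]; exact h3
    have hcr : c ∈ rSet C ep tp i := by
      refine Finset.mem_filter.mpr ⟨hc, ?_⟩
      intro he
      rw [he] at hμ'mem
      exact hμ'mem
    have : c = cX := by
      have := hX i hi ▸ hcr
      simpa using this
    subst this
    exact ⟨tr, htrc, h1, h2, h3⟩
end
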